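/- Let R be a commutative noetherian ring and suppose 0 → P → A → B → 0 is a short exact sequence of finitely generated R-modules with P a finitely generated projective R-module. Then the stable annihilator of B is contained in the stable annihilator of A. -/
import Mathlib


/-- `a` lies in the stable annihilator of `M`: multiplication by `a` on `M` factors
through a finitely generated projective `R`-module. -/
def StablyAnn (R : Type) [CommRing R] (M : Type) [AddCommGroup M] [Module R M] (a : R) : Prop :=
  ∃ (P : Type) (_ : AddCommGroup P) (_ : Module R P),
    Module.Finite R P ∧ Module.Projective R P ∧
    ∃ (f : M →ₗ[R] P) (g : P →ₗ[R] M), g ∘ₗ f = a • (LinearMap.id : M →ₗ[R] M)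

/-- If 0 -> P -> A -> B -> 0 is exact with P finitely generated projective, then the stable annihilator of B is contained in that of A. -/
theorem stablyAnn_le_of_proj_extension (R : Type) [CommRing R] [IsNoetherianRing R]
    (P A B : Type) [AddCommGroup P] [Module R P] [Module.Finite R P] [Module.Projective R P]
    [AddCommGroup A] [Module R A] [Module.Finite R A]
    [AddCommGroup B] [Module R B] [Module.Finite R B]
    (f : P →ₗ[R] A) (g : A →ₗ[R] B) (hf : Function.Injective f) (hg : Function.Surjective g)
    (hfg : LinearMap.range f = LinearMap.ker g) :
    ∀ a : R, StablyAnn R B a → StablyAnn R A a := by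
  rintro a ⟨Q, _, _, hQfin, hQproj, u, v, huv⟩
  -- lift v : Q →ₗ B along the surjection g to w : Q →ₗ A
  obtain ⟨w, hw⟩ := Module.projective_lifting_property g v hg
  -- the map a•id - w ∘ u ∘ g lands in ker g = range f
  set d : A →ₗ[R] A := a • LinearMap.id - w ∘ₗ u ∘ₗ g with hd
  have hrange : ∀ x : A, d x ∈ LinearMap.range f := by
    intro x
    rw [hfg, LinearMap.mem_ker]
    have h1 : g (w (u (g x))) = v (u (g x)) := LinearMap.congr_fun hw (u (g x))
    have h2 : v (u (g x)) = a • g x := LinearMap.congr_fun huv (g x)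
    simp [hd, h1, h2]
  let e := LinearEquiv.ofInjective f hf
  let h : A →ₗ[R] P := e.symm.toLinearMap ∘ₗ LinearMap.codRestrict (LinearMap.range f) d hrange
  have hfh : ∀ x : A, f (h x) = d x := by
    intro x
    show f ((LinearEquiv.ofInjective f hf).symm ⟨d x, hrange x⟩) = d x
    rw [← LinearEquiv.ofInjective_apply f (h := hf), LinearEquiv.apply_symm_apply]
  refine ⟨P × Q, inferInstance, inferInstance, inferInstance, inferInstance,
    LinearMap.prod h (u ∘ₗ g), f.coprod w ∘ₗ (LinearMap.fst R P Q).prod (LinearMap.snd R P Q), ?_⟩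
  ext x
  have := hfh x
  simp only [hd, LinearMap.sub_apply, LinearMap.smul_apply, LinearMap.id_apply] at this
  simp [LinearMap.comp_apply, LinearMap.coprod_apply, this]
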